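/- arXiv:1510.05309 — 2 statements merged into one kernel-verified Lean document; each statement's English description precedes it below -/
import Mathlib

section
/- Let $E$ be a row-finite directed graph with no sources, $R$ an integral domain with involution, and $n$ a normalizer of the diagonal $D(E)$ in the Steinberg algebra $A_R(G_E)$. Then $\operatorname{supp}(n)\operatorname{supp}(n)^{-1} \cup \operatorname{supp}(n)^{-1}\operatorname{supp}(n)$ is contained in the isotropy subgroupoid $\operatorname{Iso}(G_E) = \{g \in G_E : r(g) = s(g)\}$. -/
open scoped Classical BigOperators

namespace LPA

structure DirGraph where
  V : Type
  E : Type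
  r : E → V
  s : E → V

structure InfPath (G : DirGraph) where
  edges : ℕ → G.E
  compat : ∀ i, G.s (edges i) = G.r (edges (i + 1))

structure FinPath (G : DirGraph) where
  len : ℕ
  vtx : G.V
  edges : ℕ → G.E
  compat : ∀ i, i + 1 < len → G.s (edges i) = G.r (edges (i + 1))
  vtx_eq : 0 < len → vtx = G.r (edges 0)

variable {G : DirGraph}

/-- The source vertex of a finite path (its `vtx` if it has length `0`). -/
def FinPath.src (μ : FinPath G) : G.V :=
  if μ.len = 0 then μ.vtx else G.s (μ.edges (μ.len - 1))

/-- The range vertex of an infinite path. -/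
def InfPath.rng (x : InfPath G) : G.V := G.r (x.edges 0)

/-- `x ∼ₖ y`: shift equivalence with lag `k`. -/
def ShiftEquiv (x : InfPath G) (k : ℤ) (y : InfPath G) : Prop :=
  ∃ a b N : ℕ, (a : ℤ) - (b : ℤ) = k ∧ ∀ i, N ≤ i → x.edges (i + a) = y.edges (i + b)

def RowFinite (G : DirGraph) : Prop := ∀ v : G.V, {e : G.E | G.r e = v}.Finite

def NoSources (G : DirGraph) : Prop := ∀ v : G.V, ∃ e : G.E, G.r e = v

/-- `x = μ z`: the infinite path `x` is the concatenation of the finite path `μ`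
with the infinite path `z`. -/
def IsConcat (μ : FinPath G) (z x : InfPath G) : Prop :=
  z.rng = μ.src ∧ ∀ i, x.edges i = if i < μ.len then μ.edges i else z.edges (i - μ.len)

/-- `ρ = μ β`: concatenation of finite paths. -/
def IsAppendF (μ β ρ : FinPath G) : Prop :=
  ρ.len = μ.len + β.len ∧ (∀ i < μ.len, ρ.edges i = μ.edges i) ∧
    (∀ i < β.len, ρ.edges (μ.len + i) = β.edges i) ∧
    ρ.vtx = if μ.len = 0 then β.vtx else μ.vtx

/-- Triples `(x, k, y)`: the ambient type of the graph groupoid. -/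
abbrev GTrip (G : DirGraph) := InfPath G × ℤ × InfPath G

def gmul (g h : GTrip G) : GTrip G := (g.1, g.2.1 + h.2.1, h.2.2)
def ginv (g : GTrip G) : GTrip G := (g.2.2, -g.2.1, g.1)
def unit (x : InfPath G) : GTrip G := (x, 0, x)

def GraphGroupoid (G : DirGraph) : Set (GTrip G) :=
  {g | ShiftEquiv g.1 g.2.1 g.2.2}

/-- `BC` for subsets of the groupoid. -/
def setMul (B C : Set (GTrip G)) : Set (GTrip G) :=
  {g | ∃ γ ∈ B, ∃ η ∈ C, γ.2.2 = η.1 ∧ g = gmul γ η}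

def setInv (B : Set (GTrip G)) : Set (GTrip G) := ginv '' B

/-- The cylinder set `Z(μ)` of infinite paths extending `μ`. -/
def Zset (μ : FinPath G) : Set (InfPath G) :=
  {x | (∀ i < μ.len, x.edges i = μ.edges i) ∧ x.rng = μ.vtx}

/-- The basic compact open bisection `Z(μ,ν) = {(μz, |μ|-|ν|, νz)}`. -/
def ZZ (μ ν : FinPath G) : Set (GTrip G) :=
  {g | ∃ z : InfPath G, IsConcat μ z g.1 ∧ IsConcat ν z g.2.2 ∧
    g.2.1 = (μ.len : ℤ) - (ν.len : ℤ)}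

instance : TopologicalSpace (InfPath G) :=
  TopologicalSpace.generateFrom {S | ∃ μ : FinPath G, S = Zset μ}

def unitSet (S : Set (InfPath G)) : Set (GTrip G) := {g | ∃ x ∈ S, g = unit x}

variable (R : Type) [CommRing R]

/-- The diagonal `D(E)` of the Steinberg algebra. -/
noncomputable def Diag (G : DirGraph) : Submodule R (GTrip G → R) :=
  Submodule.span R {f | ∃ μ : FinPath G, f = Set.indicator (unitSet (Zset μ)) 1}

/-- The Steinberg algebra `A_R(G_E)` as a set of functions on the groupoid. -/
noncomputable def Steinberg (G : DirGraph) : Submodule R (GTrip G → R) :=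
  Submodule.span R
    {f | ∃ μ ν : FinPath G, μ.src = ν.src ∧ f = Set.indicator (ZZ μ ν) 1}

variable {R}

/-- Convolution product. -/
noncomputable def conv (f g : GTrip G → R) : GTrip G → R :=
  fun γ => ∑ᶠ η ∈ {η : GTrip G | η.1 = γ.1}, f η * g (gmul (ginv η) γ)

/-- Involution `f^*(γ) = star (f (γ⁻¹))`. -/
def starf [StarRing R] (f : GTrip G → R) : GTrip G → R :=
  fun γ => star (f (ginv γ))

/-- `n` is a normalizer of the diagonal. -/
def IsNormalizer [StarRing R] (n : GTrip G → R) : Prop :=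
  n ∈ Steinberg R G ∧ ∀ d ∈ Diag R G,
    conv (conv n d) (starf n) ∈ Diag R G ∧ conv (conv (starf n) d) n ∈ Diag R G

/-- `α_n(x) = r(supp(n) x)` (given by a choice; unique for normalizers). -/
noncomputable def alphaFun (n : GTrip G → R) (x : InfPath G) : InfPath G :=
  if h : ∃ g : GTrip G, n g ≠ 0 ∧ g.2.2 = x then h.choose.1 else x

/-- `dom(n) = supp(n^* n)`, as a subset of the infinite path space. -/
noncomputable def domSet [StarRing R] (n : GTrip G → R) : Set (InfPath G) :=
  {x | conv (starf n) n (unit x) ≠ 0}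

/-- `ran(n) = supp(n n^*)`, as a subset of the infinite path space. -/
noncomputable def ranSet [StarRing R] (n : GTrip G → R) : Set (InfPath G) :=
  {x | conv n (starf n) (unit x) ≠ 0}

/-- `d ∘ α_n`, viewed as a function on the groupoid vanishing off `s(supp n)`. -/
noncomputable def dAlpha (d n : GTrip G → R) : GTrip G → R := fun g =>
  if (g.2.1 = 0 ∧ g.1 = g.2.2 ∧ ∃ h : GTrip G, n h ≠ 0 ∧ h.2.2 = g.2.2)
  then d (unit (alphaFun n g.2.2)) else 0

/-- `p_x`, the characteristic function of the unit `{x}`. -/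
noncomputable def ppt (R : Type) [CommRing R] (x : InfPath G) : GTrip G → R :=
  Set.indicator {unit x} 1

/-- `f` is homogeneous of degree `k`. -/
def Homog (k : ℤ) (f : GTrip G → R) : Prop := ∀ g : GTrip G, f g ≠ 0 → g.2.1 = k

def IsCycle (η : FinPath G) : Prop :=
  0 < η.len ∧ η.src = η.vtx ∧
    ∀ i j, 0 < i → i + 1 < η.len → 0 < j → j + 1 < η.len → i ≠ j →
      G.s (η.edges i) ≠ G.r (η.edges j)

def HasEntrance (η : FinPath G) : Prop :=
  ∃ (e : G.E) (i : ℕ), i < η.len ∧ G.r e = G.r (η.edges i) ∧ e ≠ η.edges i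

/-- `z = η η η ⋯`. -/
def IsPeriodicOf (η : FinPath G) (z : InfPath G) : Prop :=
  ∀ i, z.edges i = η.edges (i % η.len)

end LPA

namespace LPA

variable {G : DirGraph}

theorem InfPath.ext' {x y : InfPath G} (h : ∀ i, x.edges i = y.edges i) : x = y := by
  cases x; cases y
  simp only [InfPath.mk.injEq]
  exact funext h

theorem ShiftEquiv.symm' {x y : InfPath G} {k : ℤ} (h : ShiftEquiv x k y) :
    ShiftEquiv y (-k) x := by
  obtain ⟨a, b, N, hab, h⟩ := h
  exact ⟨b, a, N, by omega, fun i hi => (h i hi).symm⟩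

theorem ShiftEquiv.trans' {x y z : InfPath G} {k k' : ℤ} (h : ShiftEquiv x k y)
    (h' : ShiftEquiv y k' z) : ShiftEquiv x (k + k') z := by
  obtain ⟨a, b, N, hab, h⟩ := h
  obtain ⟨a', b', N', hab', h'⟩ := h'
  refine ⟨a + a', b + b', N + N', by omega, fun i hi => ?_⟩
  have h1 := h (i + a') (by omega)
  have h2 := h' (i + b) (by omega)
  rw [show i + (a + a') = i + a' + a from by omega, h1,
    show i + a' + b = i + b + a' from by omega, h2,
    show i + b + b' = i + (b + b') from by omega]

theorem span_vanish {R : Type} [CommRing R] {S : Set (GTrip G → R)} {n : GTrip G → R}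
    (hn : n ∈ Submodule.span R S) {g : GTrip G} (h : ∀ f ∈ S, f g = 0) : n g = 0 := by
  induction hn using Submodule.span_induction with
  | mem f hf => exact h f hf
  | zero => rfl
  | add f f' _ _ hf hf' => simp [Pi.add_apply, hf, hf']
  | smul r f _ hf => simp [Pi.smul_apply, hf]

theorem ZZ_shiftEquiv {μ ν : FinPath G} {ξ : GTrip G} (h : ξ ∈ ZZ μ ν) :
    ShiftEquiv ξ.1 ξ.2.1 ξ.2.2 := by
  obtain ⟨z, ⟨_, h1⟩, ⟨_, h2⟩, hk⟩ := h
  refine ⟨μ.len, ν.len, 0, by omega, fun i _ => ?_⟩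
  rw [h1 (i + μ.len), h2 (i + ν.len)]
  simp

theorem diag_unit_supp {R : Type} [CommRing R] {d : GTrip G → R} (hd : d ∈ Diag R G)
    {g : GTrip G} (h : d g ≠ 0) : ∃ y : InfPath G, g = unit y := by
  by_contra hc
  refine h (span_vanish hd ?_)
  rintro f ⟨μ, rfl⟩
  apply Set.indicator_of_notMem
  rintro ⟨y, _, hgy⟩
  exact hc ⟨y, hgy⟩

theorem conv_diag {R : Type} [CommRing R] (f d : GTrip G → R)
    (hd : ∀ g : GTrip G, d g ≠ 0 → ∃ y : InfPath G, g = unit y) (ξ : GTrip G) :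
    conv f d ξ = f ξ * d (unit ξ.2.2) := by
  show (∑ᶠ η ∈ {η : GTrip G | η.1 = ξ.1}, f η * d (gmul (ginv η) ξ)) = _
  rw [finsum_mem_def, finsum_eq_single _ ξ]
  · rw [Set.indicator_of_mem (show ξ ∈ {η : GTrip G | η.1 = ξ.1} from rfl)]
    have : gmul (ginv ξ) ξ = unit ξ.2.2 := by
      simp [gmul, ginv, unit]
    rw [this]
  · intro α hα
    by_cases hmem : α ∈ {η : GTrip G | η.1 = ξ.1}
    · rw [Set.indicator_of_mem hmem]
      rcases eq_or_ne (d (gmul (ginv α) ξ)) 0 with h0 | h0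
      · rw [h0, mul_zero]
      · exfalso
        obtain ⟨y, hy⟩ := hd _ h0
        have h1 : α.2.2 = y ∧ -α.2.1 + ξ.2.1 = 0 ∧ ξ.2.2 = y := by
          simpa [gmul, ginv, unit, Prod.ext_iff] using hy
        apply hα
        have hm : α.1 = ξ.1 := hmem
        obtain ⟨a1, a2, a3⟩ := α
        obtain ⟨b1, b2, b3⟩ := ξ
        simp only at hm h1
        simp [Prod.ext_iff, hm, h1.1, h1.2.2.symm]
        omega
    · rw [Set.indicator_of_notMem hmem]

theorem ZZ_src_subsingleton (μ ν : FinPath G) (w : InfPath G) :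
    Set.Subsingleton {ξ : GTrip G | ξ ∈ ZZ μ ν ∧ ξ.1 = w} := by
  rintro ⟨x1, k1, y1⟩ ⟨⟨z, ⟨_, hz2⟩, ⟨_, hw2⟩, hk⟩, h1⟩
    ⟨x2, k2, y2⟩ ⟨⟨z', ⟨_, hz2'⟩, ⟨_, hw2'⟩, hk'⟩, h2⟩
  simp only at h1 h2 hk hk' hz2 hw2 hz2' hw2' ⊢
  subst h1; subst h2
  have hz : ∀ j, z.edges j = z'.edges j := by
    intro j
    have e1 := hz2 (j + μ.len)
    have e2 := hz2' (j + μ.len)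
    rw [if_neg (by omega), Nat.add_sub_cancel] at e1 e2
    rw [← e1, ← e2]
  have hy : y1 = y2 := by
    apply InfPath.ext'
    intro i
    rw [hw2 i, hw2' i]
    split
    · rfl
    · rw [hz]
  rw [hy, hk, hk']

theorem ZZ_tgt_subsingleton (μ ν : FinPath G) (w : InfPath G) :
    Set.Subsingleton {ξ : GTrip G | ξ ∈ ZZ μ ν ∧ ξ.2.2 = w} := by
  rintro ⟨x1, k1, y1⟩ ⟨⟨z, ⟨_, hz2⟩, ⟨_, hw2⟩, hk⟩, h1⟩
    ⟨x2, k2, y2⟩ ⟨⟨z', ⟨_, hz2'⟩, ⟨_, hw2'⟩, hk'⟩, h2⟩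
  simp only at h1 h2 hk hk' hz2 hw2 hz2' hw2' ⊢
  subst h1; subst h2
  have hz : ∀ j, z.edges j = z'.edges j := by
    intro j
    have e1 := hw2 (j + ν.len)
    have e2 := hw2' (j + ν.len)
    rw [if_neg (by omega), Nat.add_sub_cancel] at e1 e2
    rw [← e1, ← e2]
  have hy : x1 = x2 := by
    apply InfPath.ext'
    intro i
    rw [hz2 i, hz2' i]
    split
    · rfl
    · rw [hz]
  rw [hy, hk, hk']

theorem finite_slice {R : Type} [CommRing R] {n : GTrip G → R} (hn : n ∈ Steinberg R G)
    (P : GTrip G → Prop)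
    (hP : ∀ μ ν : FinPath G, Set.Subsingleton {ξ : GTrip G | ξ ∈ ZZ μ ν ∧ P ξ}) :
    {ξ : GTrip G | n ξ ≠ 0 ∧ P ξ}.Finite := by
  rw [Steinberg, Submodule.mem_span_set] at hn
  obtain ⟨c, hcs, hsum⟩ := hn
  have key : {ξ : GTrip G | n ξ ≠ 0 ∧ P ξ} ⊆
      ⋃ f ∈ (c.support : Set (GTrip G → R)), {ξ : GTrip G | f ξ ≠ 0 ∧ P ξ} := by
    rintro ξ ⟨hξ, hPξ⟩
    have : ∃ f ∈ c.support, f ξ ≠ 0 := by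
      by_contra hno
      push_neg at hno
      apply hξ
      rw [← hsum, Finsupp.sum]
      rw [Finset.sum_apply]
      apply Finset.sum_eq_zero
      intro f hf
      simp [hno f hf]
    obtain ⟨f, hf, hfξ⟩ := this
    exact Set.mem_biUnion hf ⟨hfξ, hPξ⟩
  refine Set.Finite.subset (Set.Finite.biUnion c.support.finite_toSet fun f hf => ?_) key
  obtain ⟨μ, ν, _, rfl⟩ := hcs hf
  refine Set.Finite.subset ((hP μ ν).finite) ?_
  rintro ξ ⟨hξ, hPξ⟩
  refine ⟨?_, hPξ⟩
  by_contra hc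
  exact hξ (Set.indicator_of_notMem hc 1)


theorem normalizer_same_source {R : Type} [CommRing R] [IsDomain R] [StarRing R]
    {n : GTrip G → R} (hn : IsNormalizer n) {γ η : GTrip G}
    (hγ : n γ ≠ 0) (hη : n η ≠ 0) (hse : γ.2.2 = η.2.2) : γ.1 = η.1 := by
  by_contra hne
  set x := γ.2.2 with hx
  set a : ℤ → R := fun k => n (γ.1, k, x) with ha
  set b : ℤ → R := fun k => n (η.1, k, x) with hb
  have Fs : {ξ : GTrip G | n ξ ≠ 0 ∧ ξ.1 = γ.1}.Finite :=
    finite_slice hn.1 _ (fun μ ν => ZZ_src_subsingleton μ ν γ.1)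
  have Fs' : {ξ : GTrip G | n ξ ≠ 0 ∧ ξ.1 = η.1}.Finite :=
    finite_slice hn.1 _ (fun μ ν => ZZ_src_subsingleton μ ν η.1)
  have hfa : (Function.support a).Finite := by
    refine Set.Finite.subset (Set.Finite.preimage
      (f := fun k : ℤ => ((γ.1, k, x) : GTrip G)) (fun k _ l _ h => ?_) Fs) ?_
    · simpa [Prod.ext_iff] using h
    · exact fun k hk => ⟨hk, rfl⟩
  have hfb : (Function.support b).Finite := by
    refine Set.Finite.subset (Set.Finite.preimage
      (f := fun k : ℤ => ((η.1, k, x) : GTrip G)) (fun k _ l _ h => ?_) Fs') ?_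
    · simpa [Prod.ext_iff] using h
    · exact fun k hk => ⟨hk, rfl⟩
  have haγ : a γ.2.1 ≠ 0 := hγ
  have hbη : b η.2.1 ≠ 0 := by
    show n (η.1, η.2.1, x) ≠ 0
    rw [hse]
    exact hη
  have hane : (hfa.toFinset).Nonempty := ⟨γ.2.1, by simpa using haγ⟩
  have hbne : (hfb.toFinset).Nonempty := ⟨η.2.1, by simpa using hbη⟩
  set k0 := hfa.toFinset.max' hane with hk0def
  set j0 := hfb.toFinset.min' hbne with hj0def
  have hak0 : a k0 ≠ 0 := by simpa using hfa.toFinset.max'_mem hane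
  have hbj0 : b j0 ≠ 0 := by simpa using hfb.toFinset.min'_mem hbne
  have hamax : ∀ k, a k ≠ 0 → k ≤ k0 := fun k hk => hfa.toFinset.le_max' k (by simpa using hk)
  have hbmin : ∀ k, b k ≠ 0 → j0 ≤ k := fun k hk => hfb.toFinset.min'_le k (by simpa using hk)
  set L : ℕ := (Fs.toFinset.sup fun ξ =>
    if h : ∃ i, ξ.2.2.edges i ≠ x.edges i then h.choose else 0) + 1 with hLdef
  have hLkey : ∀ ξ : GTrip G, n ξ ≠ 0 → ξ.1 = γ.1 →
      (∀ i < L, ξ.2.2.edges i = x.edges i) → ξ.2.2 = x := by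
    intro ξ h1 h2 h3
    by_contra hc
    have hex : ∃ i, ξ.2.2.edges i ≠ x.edges i := by
      by_contra hno
      push_neg at hno
      exact hc (InfPath.ext' hno)
    have hmem : ξ ∈ Fs.toFinset := by
      rw [Set.Finite.mem_toFinset]; exact ⟨h1, h2⟩
    have hle : hex.choose ≤ Fs.toFinset.sup fun ξ : GTrip G =>
        if h : ∃ i, ξ.2.2.edges i ≠ x.edges i then h.choose else 0 := by
      have := Finset.le_sup (f := fun ξ : GTrip G =>
        if h : ∃ i, ξ.2.2.edges i ≠ x.edges i then h.choose else 0) hmem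
      simpa [dif_pos hex] using this
    exact hex.choose_spec (h3 _ (by omega))
  set β : FinPath G := ⟨L, x.rng, x.edges, fun i _ => x.compat i, fun _ => rfl⟩ with hβ
  set d : GTrip G → R := Set.indicator (unitSet (Zset β)) 1 with hd
  have hdD : d ∈ Diag R G := Submodule.subset_span ⟨β, hd⟩
  have hdu : ∀ g : GTrip G, d g ≠ 0 → ∃ y : InfPath G, g = unit y := by
    intro g hg
    by_contra hc
    apply hg
    rw [hd]
    apply Set.indicator_of_notMem
    rintro ⟨y, _, hgy⟩
    exact hc ⟨y, hgy⟩
  have hdval1 : ∀ y : InfPath G, (∀ i < L, y.edges i = x.edges i) → d (unit y) = 1 := by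
    intro y hy
    rw [hd, Set.indicator_of_mem, Pi.one_apply]
    refine ⟨y, ⟨fun i hi => hy i hi, ?_⟩, rfl⟩
    show y.rng = x.rng
    unfold InfPath.rng
    rw [hy 0 (by omega)]
  have hdval0 : ∀ y : InfPath G, ¬(∀ i < L, y.edges i = x.edges i) → d (unit y) = 0 := by
    intro y hy
    rw [hd]
    apply Set.indicator_of_notMem
    rintro ⟨y', hy', he⟩
    apply hy
    intro i hi
    have hyy : y = y' := congrArg Prod.fst he
    rw [hyy]
    exact hy'.1 i hi
  set t : ℤ := k0 - j0 with htdef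
  set g : GTrip G := (γ.1, t, η.1) with hgdef
  have hDiag := (hn.2 d hdD).1
  have hgz : conv (conv n d) (starf n) g = 0 := by
    by_contra hc
    obtain ⟨y, hy⟩ := diag_unit_supp hDiag hc
    apply hne
    have e1 : γ.1 = y := congrArg Prod.fst hy
    have e2 : η.1 = y := congrArg (fun p : GTrip G => p.2.2) hy
    rw [e1, e2]
  set ξ0 : GTrip G := (γ.1, k0, x) with hξ0
  have egi : ∀ ζ : GTrip G, ginv (gmul (ginv ζ) g) = ((η.1 : InfPath G), ζ.2.1 - t, ζ.2.2) := by
    intro ζ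
    show ((η.1, -(-ζ.2.1 + t), ζ.2.2) : GTrip G) = _
    rw [show -(-ζ.2.1 + t) = ζ.2.1 - t from by ring]
  have hval : conv (conv n d) (starf n) g = a k0 * star (b j0) := by
    show (∑ᶠ ξ ∈ {ξ' : GTrip G | ξ'.1 = g.1}, conv n d ξ * starf n (gmul (ginv ξ) g)) = _
    rw [finsum_mem_def]
    have hside : ∀ ξ : GTrip G, ξ ≠ ξ0 → Set.indicator {ξ' : GTrip G | ξ'.1 = g.1}
        (fun ξ => conv n d ξ * starf n (gmul (ginv ξ) g)) ξ = 0 := by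
      intro ξ hξ
      by_cases hmem : ξ ∈ {ξ' : GTrip G | ξ'.1 = g.1}
      · rw [Set.indicator_of_mem hmem]
        rw [conv_diag _ _ hdu]
        by_contra hnz
        have h1 : n ξ ≠ 0 := by intro h; apply hnz; rw [h]; ring
        have h2 : d (unit ξ.2.2) ≠ 0 := by intro h; apply hnz; rw [h]; ring
        have h3 : starf n (gmul (ginv ξ) g) ≠ 0 := by intro h; apply hnz; rw [h]; ring
        have hmem' : ξ.1 = γ.1 := hmem
        have hedge : ∀ i < L, ξ.2.2.edges i = x.edges i := by
          by_contra hcc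
          exact h2 (hdval0 _ hcc)
        have hx22 : ξ.2.2 = x := hLkey ξ h1 hmem' hedge
        have ha1 : a ξ.2.1 ≠ 0 := by
          show n (γ.1, ξ.2.1, x) ≠ 0
          rw [← hmem', ← hx22]
          exact h1
        have hk1 : ξ.2.1 ≤ k0 := hamax _ ha1
        have hb1 : b (ξ.2.1 - t) ≠ 0 := by
          intro hcon
          apply h3
          show star (n (ginv (gmul (ginv ξ) g))) = 0
          rw [egi ξ, hx22]
          show star (b (ξ.2.1 - t)) = 0
          rw [hcon, star_zero]
        have hk2 : j0 ≤ ξ.2.1 - t := hbmin _ hb1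
        apply hξ
        have hkk : ξ.2.1 = k0 := by omega
        calc ξ = (ξ.1, ξ.2.1, ξ.2.2) := rfl
        _ = ξ0 := by rw [hmem', hkk, hx22]
      · rw [Set.indicator_of_notMem hmem]
    rw [finsum_eq_single _ ξ0 hside]
    rw [Set.indicator_of_mem (show ξ0 ∈ {ξ' : GTrip G | ξ'.1 = g.1} from rfl)]
    rw [conv_diag _ _ hdu]
    have e1 : d (unit ξ0.2.2) = 1 := hdval1 _ (fun i _ => rfl)
    have e2 : starf n (gmul (ginv ξ0) g) = star (b j0) := by
      show star (n (ginv (gmul (ginv ξ0) g))) = star (n (η.1, j0, x))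
      rw [egi ξ0, show ξ0.2.1 - t = j0 from by show k0 - t = j0; omega]
    rw [e1, e2, mul_one]
  rw [hval] at hgz
  have hstar : star (b j0) ≠ 0 := fun h => hbj0 (by rwa [star_eq_zero] at h)
  exact (mul_ne_zero hak0 hstar) hgz

theorem normalizer_same_range {R : Type} [CommRing R] [IsDomain R] [StarRing R]
    {n : GTrip G → R} (hn : IsNormalizer n) {γ η : GTrip G}
    (hγ : n γ ≠ 0) (hη : n η ≠ 0) (hre : γ.1 = η.1) : γ.2.2 = η.2.2 := by
  by_contra hne
  set w := γ.1 with hw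
  set a : ℤ → R := fun k => n (w, k, γ.2.2) with ha
  set b : ℤ → R := fun k => n (w, k, η.2.2) with hb
  have Fs : {ξ : GTrip G | n ξ ≠ 0 ∧ ξ.2.2 = γ.2.2}.Finite :=
    finite_slice hn.1 _ (fun μ ν => ZZ_tgt_subsingleton μ ν γ.2.2)
  have Fs' : {ξ : GTrip G | n ξ ≠ 0 ∧ ξ.2.2 = η.2.2}.Finite :=
    finite_slice hn.1 _ (fun μ ν => ZZ_tgt_subsingleton μ ν η.2.2)
  have hfa : (Function.support a).Finite := by
    refine Set.Finite.subset (Set.Finite.preimage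
      (f := fun k : ℤ => ((w, k, γ.2.2) : GTrip G)) (fun k _ l _ h => ?_) Fs) ?_
    · simpa [Prod.ext_iff] using h
    · exact fun k hk => ⟨hk, rfl⟩
  have hfb : (Function.support b).Finite := by
    refine Set.Finite.subset (Set.Finite.preimage
      (f := fun k : ℤ => ((w, k, η.2.2) : GTrip G)) (fun k _ l _ h => ?_) Fs') ?_
    · simpa [Prod.ext_iff] using h
    · exact fun k hk => ⟨hk, rfl⟩
  have haγ : a γ.2.1 ≠ 0 := hγ
  have hbη : b η.2.1 ≠ 0 := by
    show n (w, η.2.1, η.2.2) ≠ 0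
    rw [hre]
    exact hη
  have hane : (hfa.toFinset).Nonempty := ⟨γ.2.1, by simpa using haγ⟩
  have hbne : (hfb.toFinset).Nonempty := ⟨η.2.1, by simpa using hbη⟩
  set m0 := hfa.toFinset.max' hane with hm0def
  set j0 := hfb.toFinset.min' hbne with hj0def
  have ham0 : a m0 ≠ 0 := by simpa using hfa.toFinset.max'_mem hane
  have hbj0 : b j0 ≠ 0 := by simpa using hfb.toFinset.min'_mem hbne
  have hamax : ∀ k, a k ≠ 0 → k ≤ m0 := fun k hk => hfa.toFinset.le_max' k (by simpa using hk)
  have hbmin : ∀ k, b k ≠ 0 → j0 ≤ k := fun k hk => hfb.toFinset.min'_le k (by simpa using hk)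
  set L : ℕ := (Fs.toFinset.sup fun α =>
    if h : ∃ i, α.1.edges i ≠ w.edges i then h.choose else 0) + 1 with hLdef
  have hLkey : ∀ α : GTrip G, n α ≠ 0 → α.2.2 = γ.2.2 →
      (∀ i < L, α.1.edges i = w.edges i) → α.1 = w := by
    intro α h1 h2 h3
    by_contra hc
    have hex : ∃ i, α.1.edges i ≠ w.edges i := by
      by_contra hno
      push_neg at hno
      exact hc (InfPath.ext' hno)
    have hmem : α ∈ Fs.toFinset := by
      rw [Set.Finite.mem_toFinset]; exact ⟨h1, h2⟩
    have hle : hex.choose ≤ Fs.toFinset.sup fun α : GTrip G =>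
        if h : ∃ i, α.1.edges i ≠ w.edges i then h.choose else 0 := by
      have := Finset.le_sup (f := fun α : GTrip G =>
        if h : ∃ i, α.1.edges i ≠ w.edges i then h.choose else 0) hmem
      simpa [dif_pos hex] using this
    exact hex.choose_spec (h3 _ (by omega))
  set β : FinPath G := ⟨L, w.rng, w.edges, fun i _ => w.compat i, fun _ => rfl⟩ with hβ
  set d : GTrip G → R := Set.indicator (unitSet (Zset β)) 1 with hd
  have hdD : d ∈ Diag R G := Submodule.subset_span ⟨β, hd⟩
  have hdu : ∀ g : GTrip G, d g ≠ 0 → ∃ y : InfPath G, g = unit y := by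
    intro g hg
    by_contra hc
    apply hg
    rw [hd]
    apply Set.indicator_of_notMem
    rintro ⟨y, _, hgy⟩
    exact hc ⟨y, hgy⟩
  have hdval1 : ∀ y : InfPath G, (∀ i < L, y.edges i = w.edges i) → d (unit y) = 1 := by
    intro y hy
    rw [hd, Set.indicator_of_mem, Pi.one_apply]
    refine ⟨y, ⟨fun i hi => hy i hi, ?_⟩, rfl⟩
    show y.rng = w.rng
    unfold InfPath.rng
    rw [hy 0 (by omega)]
  have hdval0 : ∀ y : InfPath G, ¬(∀ i < L, y.edges i = w.edges i) → d (unit y) = 0 := by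
    intro y hy
    rw [hd]
    apply Set.indicator_of_notMem
    rintro ⟨y', hy', he⟩
    apply hy
    intro i hi
    have hyy : y = y' := congrArg Prod.fst he
    rw [hyy]
    exact hy'.1 i hi
  set t : ℤ := j0 - m0 with htdef
  set g : GTrip G := (γ.2.2, t, η.2.2) with hgdef
  have hDiag := (hn.2 d hdD).2
  have hgz : conv (conv (starf n) d) n g = 0 := by
    by_contra hc
    obtain ⟨y, hy⟩ := diag_unit_supp hDiag hc
    apply hne
    have e1 : γ.2.2 = y := congrArg Prod.fst hy
    have e2 : η.2.2 = y := congrArg (fun p : GTrip G => p.2.2) hy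
    rw [e1, e2]
  set ξ0 : GTrip G := (γ.2.2, -m0, w) with hξ0
  have egm : ∀ ζ : GTrip G, gmul (ginv ζ) g = ((ζ.2.2 : InfPath G), -ζ.2.1 + t, η.2.2) :=
    fun ζ => rfl
  have hval : conv (conv (starf n) d) n g = star (a m0) * b j0 := by
    show (∑ᶠ ξ ∈ {ξ' : GTrip G | ξ'.1 = g.1}, conv (starf n) d ξ * n (gmul (ginv ξ) g)) = _
    rw [finsum_mem_def]
    have hside : ∀ ξ : GTrip G, ξ ≠ ξ0 → Set.indicator {ξ' : GTrip G | ξ'.1 = g.1}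
        (fun ξ => conv (starf n) d ξ * n (gmul (ginv ξ) g)) ξ = 0 := by
      intro ξ hξ
      by_cases hmem : ξ ∈ {ξ' : GTrip G | ξ'.1 = g.1}
      · rw [Set.indicator_of_mem hmem]
        rw [conv_diag _ _ hdu]
        by_contra hnz
        have h1 : starf n ξ ≠ 0 := by intro h; apply hnz; rw [h]; ring
        have h2 : d (unit ξ.2.2) ≠ 0 := by intro h; apply hnz; rw [h]; ring
        have h3 : n (gmul (ginv ξ) g) ≠ 0 := by intro h; apply hnz; rw [h]; ring
        have h1' : n (ginv ξ) ≠ 0 := by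
          intro h
          apply h1
          show star (n (ginv ξ)) = 0
          rw [h, star_zero]
        have hmem' : ξ.1 = γ.2.2 := hmem
        have hedge : ∀ i < L, ξ.2.2.edges i = w.edges i := by
          by_contra hcc
          exact h2 (hdval0 _ hcc)
        have hx22 : ξ.2.2 = w := by
          refine hLkey (ginv ξ) h1' ?_ ?_
          · show ξ.1 = γ.2.2
            exact hmem'
          · show ∀ i < L, ξ.2.2.edges i = w.edges i
            exact hedge
        have ha1 : a (-ξ.2.1) ≠ 0 := by
          show n (w, -ξ.2.1, γ.2.2) ≠ 0
          rw [← hmem', ← hx22]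
          exact h1'
        have hk1 : -ξ.2.1 ≤ m0 := hamax _ ha1
        have hb1 : b (-ξ.2.1 + t) ≠ 0 := by
          intro hcon
          apply h3
          rw [egm ξ, hx22]
          show b (-ξ.2.1 + t) = 0
          exact hcon
        have hk2 : j0 ≤ -ξ.2.1 + t := hbmin _ hb1
        apply hξ
        have hkk : ξ.2.1 = -m0 := by omega
        calc ξ = (ξ.1, ξ.2.1, ξ.2.2) := rfl
        _ = ξ0 := by rw [hmem', hkk, hx22]
      · rw [Set.indicator_of_notMem hmem]
    rw [finsum_eq_single _ ξ0 hside]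
    rw [Set.indicator_of_mem (show ξ0 ∈ {ξ' : GTrip G | ξ'.1 = g.1} from rfl)]
    rw [conv_diag _ _ hdu]
    have e1 : d (unit ξ0.2.2) = 1 := hdval1 _ (fun i _ => rfl)
    have e0 : starf n ξ0 = star (a m0) := by
      show star (n (w, -(-m0), γ.2.2)) = star (n (w, m0, γ.2.2))
      rw [show -(-m0) = m0 from by ring]
    have e2 : n (gmul (ginv ξ0) g) = b j0 := by
      rw [egm ξ0]
      show n (w, -(-m0) + t, η.2.2) = n (w, j0, η.2.2)
      rw [show -(-m0) + t = j0 from by omega]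
    rw [e1, e0, e2, mul_one]
  rw [hval] at hgz
  have hstar : star (a m0) ≠ 0 := fun h => ham0 (by rwa [star_eq_zero] at h)
  exact (mul_ne_zero hstar hbj0) hgz

end LPA

open LPA in
/-- For a normalizer `n` of the diagonal,
`supp(n) supp(n)⁻¹ ∪ supp(n)⁻¹ supp(n) ⊆ Iso(G_E)`. -/
theorem supp_normalizer_iso {G : DirGraph} (hrf : RowFinite G) (hns : NoSources G)
    {R : Type} [CommRing R] [IsDomain R] [StarRing R]
    (n : GTrip G → R) (hn : IsNormalizer n) :
    setMul (Function.support n) (setInv (Function.support n)) ∪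
      setMul (setInv (Function.support n)) (Function.support n) ⊆
      {g : GTrip G | g ∈ GraphGroupoid G ∧ g.1 = g.2.2} := by
  have hsupp : ∀ ξ : GTrip G, n ξ ≠ 0 → ShiftEquiv ξ.1 ξ.2.1 ξ.2.2 := by
    intro ξ hξ
    by_contra hc
    apply hξ
    apply span_vanish hn.1
    rintro f ⟨μ, ν, -, rfl⟩
    apply Set.indicator_of_notMem
    intro hm
    exact hc (ZZ_shiftEquiv hm)
  rintro g (⟨γ, hγ, η, ⟨η', hη', rfl⟩, hcomp, rfl⟩ | ⟨γ, ⟨γ', hγ', rfl⟩, η, hη, hcomp, rfl⟩)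
  · have hγ0 : n γ ≠ 0 := hγ
    have hη0 : n η' ≠ 0 := hη'
    have hcs : γ.2.2 = η'.2.2 := hcomp
    have h1 : γ.1 = η'.1 := normalizer_same_source hn hγ0 hη0 hcs
    refine ⟨?_, h1⟩
    show ShiftEquiv γ.1 (γ.2.1 + -η'.2.1) η'.1
    have s1 := hsupp γ hγ0
    have s2 := (hsupp η' hη0).symm'
    rw [hcs] at s1
    exact s1.trans' s2
  · have hγ0 : n γ' ≠ 0 := hγ'
    have hη0 : n η ≠ 0 := hη
    have hcr : γ'.1 = η.1 := hcomp
    have h2 : γ'.2.2 = η.2.2 := normalizer_same_range hn hγ0 hη0 hcr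
    refine ⟨?_, h2⟩
    show ShiftEquiv γ'.2.2 (-γ'.2.1 + η.2.1) η.2.2
    have s1 := (hsupp γ' hγ0).symm'
    have s2 := hsupp η hη0
    rw [hcr] at s1
    exact s1.trans' s2
end

section
/- Let $E$ be a row-finite directed graph with no sources, $R$ an integral domain, $n$ a normalizer of the diagonal $D(E)$ in $A_R(G_E)$, and $x$ an infinite path in $\operatorname{supp}(n)$ (identifying units with infinite paths). Then $r(\operatorname{supp}(n) \cdot \{x\})$, the set of ranges of elements of $\operatorname{supp}(n)$ with source $x$, is a singleton. -/
open scoped Classical BigOperators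

namespace LPA

variable {G : DirGraph}

variable (R : Type) [CommRing R]

variable {R}

section Aux

theorem finsum_mem_single {α M : Type*} [AddCommMonoid M] (F : α → M) (S : Set α) (a : α)
    (ha : a ∈ S) (h : ∀ b ∈ S, b ≠ a → F b = 0) : ∑ᶠ i ∈ S, F i = F a := by
  rw [finsum_mem_def, finsum_eq_single _ a]
  · simp [Set.indicator_of_mem ha]
  · intro b hb
    by_cases hbS : b ∈ S
    · simp [Set.indicator_of_mem hbS, h b hbS hb]
    · simp [Set.indicator_of_notMem hbS]

theorem InfPath.ext'_s5 {z w : InfPath G} (h : ∀ i, z.edges i = w.edges i) : z = w := by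
  cases z; cases w
  have : _ = _ := funext h
  simp_all

theorem mem_unitSet_iff {S : Set (InfPath G)} {g : GTrip G} :
    g ∈ unitSet S ↔ g.1 ∈ S ∧ g.2.1 = 0 ∧ g.2.2 = g.1 := by
  constructor
  · rintro ⟨w, hw, rfl⟩; exact ⟨hw, rfl, rfl⟩
  · rintro ⟨h1, h2, h3⟩
    exact ⟨g.1, h1, by simp [unit, Prod.ext_iff, h2, h3]⟩

theorem diag_eq_zero {R : Type} [CommRing R] {f : GTrip G → R} (hf : f ∈ Diag R G)
    (γ : GTrip G) (hγ : γ.1 ≠ γ.2.2) : f γ = 0 := by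
  induction hf using Submodule.span_induction with
  | mem f hf =>
    obtain ⟨μ, rfl⟩ := hf
    apply Set.indicator_of_notMem
    intro hmem
    exact hγ (mem_unitSet_iff.mp hmem).2.2.symm
  | zero => rfl
  | add f g _ _ hf hg => simp [Pi.add_apply, hf, hg]
  | smul c f _ hf => simp [Pi.smul_apply, hf]

theorem ZZ_range_subsingleton (μ ν : FinPath G) (y : InfPath G) :
    {g : GTrip G | g ∈ ZZ μ ν ∧ g.1 = y}.Subsingleton := by
  rintro ⟨y1, k, w⟩ ⟨⟨z, hz1, hz2, hk⟩, h1⟩ ⟨y2, k', w'⟩ ⟨⟨z', hz1', hz2', hk'⟩, h1'⟩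
  simp only at h1 h1' hk hk' ⊢
  subst h1 h1'
  have hz : z = z' := by
    apply InfPath.ext'_s5
    intro i
    have h := hz1.2 (i + μ.len)
    have h' := hz1'.2 (i + μ.len)
    rw [if_neg (by omega), Nat.add_sub_cancel] at h h'
    exact h.symm.trans h'
  subst hz
  have hw : w = w' := InfPath.ext'_s5 fun i => by rw [hz2.2 i, hz2'.2 i]
  simp [hw, hk, hk']

theorem steinberg_fiber_finite {R : Type} [CommRing R] {f : GTrip G → R}
    (hf : f ∈ Steinberg R G) (y : InfPath G) :
    {g : GTrip G | f g ≠ 0 ∧ g.1 = y}.Finite := by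
  induction hf using Submodule.span_induction with
  | mem f hf =>
    obtain ⟨μ, ν, -, rfl⟩ := hf
    apply Set.Subsingleton.finite
    intro g hg g' hg'
    have hgZ : g ∈ ZZ μ ν := by
      by_contra h; exact hg.1 (Set.indicator_of_notMem h _)
    have hgZ' : g' ∈ ZZ μ ν := by
      by_contra h; exact hg'.1 (Set.indicator_of_notMem h _)
    exact ZZ_range_subsingleton μ ν y ⟨hgZ, hg.2⟩ ⟨hgZ', hg'.2⟩
  | zero =>
    apply Set.Finite.subset (Set.finite_empty)
    rintro g ⟨hg, -⟩; exact hg rfl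
  | add f g _ _ hf hg =>
    apply (hf.union hg).subset
    rintro a ⟨ha, h1⟩
    by_cases h : f a = 0
    · right; refine ⟨fun h' => ha ?_, h1⟩
      simp [Pi.add_apply, h, h']
    · exact Or.inl ⟨h, h1⟩
  | smul c f _ hf =>
    apply hf.subset
    rintro a ⟨ha, h1⟩
    refine ⟨fun h' => ha ?_, h1⟩
    simp [Pi.smul_apply, h']

theorem ginv_gmul_ginv (p q y x' : InfPath G) (a t : ℤ) :
    ginv (gmul (ginv (p, a, q)) (y, t, x')) = (x', a - t, q) := by
  simp [ginv, gmul, Prod.ext_iff]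
  ring

theorem conv_d_apply {R : Type} [CommRing R] (n : GTrip G → R) (μ : FinPath G)
    (η : GTrip G) :
    conv n (Set.indicator (unitSet (Zset μ)) 1) η
      = n η * (if η.2.2 ∈ Zset μ then 1 else 0) := by
  show ∑ᶠ ζ ∈ {ζ : GTrip G | ζ.1 = η.1}, _ = _
  rw [finsum_mem_single _ {ζ : GTrip G | ζ.1 = η.1} η rfl ?_]
  · congr 1
    have : gmul (ginv η) η = (η.2.2, (0 : ℤ), η.2.2) := by
      simp [gmul, ginv, Prod.ext_iff]
    rw [this, Set.indicator_apply]
    by_cases h : η.2.2 ∈ Zset μ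
    · rw [if_pos (mem_unitSet_iff.mpr ⟨h, rfl, rfl⟩), if_pos h, Pi.one_apply]
    · rw [if_neg, if_neg h]
      intro hmem
      exact h (mem_unitSet_iff.mp hmem).1
  · rintro ⟨p, a, q⟩ hmem hne
    simp only [Set.mem_setOf_eq] at hmem
    have hd : Set.indicator (unitSet (Zset μ)) (1 : LPA.GTrip G → R)
        (gmul (ginv ((p, a, q) : GTrip G)) η) = 0 := by
      apply Set.indicator_of_notMem
      intro hmem2
      obtain ⟨h1, h2, h3⟩ := mem_unitSet_iff.mp hmem2
      simp only [gmul, ginv] at h2 h3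
      apply hne
      have ha : a = η.2.1 := by omega
      refine Prod.ext hmem (Prod.ext ha h3.symm)
    rw [hd, mul_zero]

end Aux

end LPA

open LPA in
/-- For a normalizer `n` and a unit `x` in `supp(n)`, the set `r(supp(n)x)` is a singleton. -/
theorem range_supp_singleton {G : DirGraph} (hrf : RowFinite G) (hns : NoSources G)
    {R : Type} [CommRing R] [IsDomain R] [StarRing R]
    (n : GTrip G → R) (hn : IsNormalizer n) (x : InfPath G)
    (hx : unit x ∈ Function.support n) :
    ∃ y : InfPath G,
      {v : InfPath G | ∃ g ∈ Function.support n, g.2.2 = x ∧ g.1 = v} = {y} := by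
  classical
  suffices key : ∀ v, (∃ g ∈ Function.support n, g.2.2 = x ∧ g.1 = v) → v = x by
    refine ⟨x, ?_⟩
    ext v
    simp only [Set.mem_setOf_eq, Set.mem_singleton_iff]
    exact ⟨key v, by intro h; rw [h]; exact ⟨unit x, hx, rfl, rfl⟩⟩
  rintro y ⟨g, hg, hgx, hgy⟩
  by_contra hyx
  have hfinY := steinberg_fiber_finite hn.1 y
  have hfinX := steinberg_fiber_finite hn.1 x
  have hAfin : {a : ℤ | n (y, a, x) ≠ 0}.Finite := by
    apply Set.Finite.subset (hfinY.image (fun g => g.2.1))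
    rintro a ha
    exact ⟨(y, a, x), ⟨ha, rfl⟩, rfl⟩
  have hBfin : {b : ℤ | n (x, b, x) ≠ 0}.Finite := by
    apply Set.Finite.subset (hfinX.image (fun g => g.2.1))
    rintro b hb
    exact ⟨(x, b, x), ⟨hb, rfl⟩, rfl⟩
  have hAne : hAfin.toFinset.Nonempty := by
    rw [Set.Finite.toFinset_nonempty]
    refine ⟨g.2.1, ?_⟩
    show n (y, g.2.1, x) ≠ 0
    rw [← hgy, ← hgx]
    exact hg
  have hBne : hBfin.toFinset.Nonempty := by
    rw [Set.Finite.toFinset_nonempty]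
    exact ⟨0, hx⟩
  set amax := hAfin.toFinset.max' hAne with hamax
  set bmin := hBfin.toFinset.min' hBne with hbmin
  have hamem : n (y, amax, x) ≠ 0 := by
    have := hAfin.toFinset.max'_mem hAne
    rwa [Set.Finite.mem_toFinset] at this
  have hbmem : n (x, bmin, x) ≠ 0 := by
    have := hBfin.toFinset.min'_mem hBne
    rwa [Set.Finite.mem_toFinset] at this
  have hAle : ∀ a, n (y, a, x) ≠ 0 → a ≤ amax := fun a ha =>
    Finset.le_max' _ a (hAfin.mem_toFinset.mpr ha)
  have hBle : ∀ b, n (x, b, x) ≠ 0 → bmin ≤ b := fun b hb =>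
    Finset.min'_le _ b (hBfin.mem_toFinset.mpr hb)
  have hZ0 : ((fun g : GTrip G => g.2.2) '' {g | n g ≠ 0 ∧ g.1 = y}).Finite := hfinY.image _
  set m : ℕ := hZ0.toFinset.sup
      (fun z => if h : ∃ i, z.edges i ≠ x.edges i then h.choose + 1 else 0) with hmdef
  have hm : ∀ z ∈ (fun g : GTrip G => g.2.2) '' {g | n g ≠ 0 ∧ g.1 = y},
      (∀ i < m, z.edges i = x.edges i) → z = x := by
    intro z hz hzi
    by_contra hzx
    have h : ∃ i, z.edges i ≠ x.edges i := by
      by_contra h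
      push_neg at h
      exact hzx (InfPath.ext'_s5 h)
    have hle : h.choose + 1 ≤ m := by
      have h2 := Finset.le_sup (f := fun z : InfPath G =>
          if h : ∃ i, z.edges i ≠ x.edges i then h.choose + 1 else 0)
        (hZ0.mem_toFinset.mpr hz)
      simp only [dif_pos h] at h2
      rw [hmdef]
      exact h2
    exact h.choose_spec (hzi _ (by omega))
  set μ : FinPath G := ⟨m, x.rng, x.edges, fun i _ => x.compat i, fun _ => rfl⟩ with hμ
  have hxZ : x ∈ Zset μ := ⟨fun i _ => rfl, rfl⟩
  have hdD : Set.indicator (unitSet (Zset μ)) 1 ∈ Diag R G :=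
    Submodule.subset_span ⟨μ, rfl⟩
  have hγ0 : conv (conv n (Set.indicator (unitSet (Zset μ)) 1)) (starf n)
      (y, amax - bmin, x) = 0 := diag_eq_zero (hn.2 _ hdD).1 _ hyx
  have hcomp : conv (conv n (Set.indicator (unitSet (Zset μ)) 1)) (starf n)
      (y, amax - bmin, x) = n (y, amax, x) * star (n (x, bmin, x)) := by
    show ∑ᶠ η ∈ {η : GTrip G | η.1 = y},
        conv n (Set.indicator (unitSet (Zset μ)) 1) η *
          starf n (gmul (ginv η) (y, amax - bmin, x)) = _
    rw [finsum_mem_single _ {η : GTrip G | η.1 = y} ((y, amax, x) : GTrip G) rfl ?_]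
    · rw [conv_d_apply, if_pos hxZ, mul_one]
      simp only [starf]
      rw [ginv_gmul_ginv]
      have : amax - (amax - bmin) = bmin := by ring
      rw [this]
    · rintro ⟨p, a, z⟩ hmem hne
      have hp : p = y := hmem
      subst hp
      rw [conv_d_apply]
      by_cases hnz : n (p, a, z) = 0
      · rw [hnz, zero_mul, zero_mul]
      by_cases hzZ : z ∈ Zset μ
      · have hzx : z = x := hm z ⟨(p, a, z), ⟨hnz, rfl⟩, rfl⟩ (fun i hi => hzZ.1 i hi)
        subst hzx
        simp only [starf]
        rw [ginv_gmul_ginv]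
        by_cases hb : n (z, a - (amax - bmin), z) = 0
        · rw [hb, star_zero, mul_zero]
        · exfalso
          have h1 : a ≤ amax := hAle a hnz
          have h2 : bmin ≤ a - (amax - bmin) := hBle _ hb
          have ha : a = amax := by omega
          exact hne (by rw [ha])
      · rw [if_neg hzZ, mul_zero, zero_mul]
  rw [hcomp] at hγ0
  rcases mul_eq_zero.mp hγ0 with h | h
  · exact hamem h
  · exact hbmem (star_eq_zero.mp h)
end
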